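/- Let L be a finite list whose entries are literals x_i or x̄_i for variables i ∈ {1,…,n}. For the ORDER problem, variable i is expressed in L iff some occurrence of x_i in L has no occurrence of x̄_i before it (equivalently, the first literal of variable i appearing in L is x_i). Let v(L) be the number of expressed variables. For a position p of L, let L−p denote L with the entry at position p removed; p is redundant if v(L−p) = v(L), critical positive if v(L−p) < v(L), and critical negative if v(L−p) > v(L); let r(L), c⁺(L), c⁻(L) denote the numbers of redundant, critical positive, and critical negative positions. Then c⁺(L) ≤ r(L) + v(L) and c⁻(L) ≤ r(L). -/

import Mathlib

/-- A literal over `n` variables: `(true, i)` represents `x i` and `(false, i)`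
represents the negated literal `x̄ i`. -/
abbrev Lit (n : ℕ) : Type := Bool × Fin n

/-- For ORDER, variable `i` is expressed in `L` iff the first literal of variable `i`
appearing in `L` is the positive literal `x i` (equivalently, some occurrence of `x i`
has no occurrence of `x̄ i` before it). -/
def OrderExpressed {n : ℕ} (L : List (Lit n)) (i : Fin n) : Prop :=
  (L.filter (fun p => p.2 = i)).head? = some (true, i)

instance {n : ℕ} (L : List (Lit n)) (i : Fin n) : Decidable (OrderExpressed L i) := by
  unfold OrderExpressed; infer_instance

/-- The ORDER fitness: the number of expressed variables. -/
def orderFitness {n : ℕ} (L : List (Lit n)) : ℕ :=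
  (Finset.univ.filter (fun i => OrderExpressed L i)).card

/-- Number of redundant positions: deleting the entry leaves the fitness unchanged. -/
def orderRedundant {n : ℕ} (L : List (Lit n)) : ℕ :=
  ((Finset.range L.length).filter
    (fun p => orderFitness (L.eraseIdx p) = orderFitness L)).card

/-- Number of critical positive positions: deleting the entry decreases the fitness. -/
def orderCritPos {n : ℕ} (L : List (Lit n)) : ℕ :=
  ((Finset.range L.length).filter
    (fun p => orderFitness (L.eraseIdx p) < orderFitness L)).card

/-- Number of critical negative positions: deleting the entry increases the fitness. -/
def orderCritNeg {n : ℕ} (L : List (Lit n)) : ℕ :=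
  ((Finset.range L.length).filter
    (fun p => orderFitness L < orderFitness (L.eraseIdx p))).card

namespace OrderAux

variable {n : ℕ}

/-- filter of variable i -/
def fi (L : List (Lit n)) (i : Fin n) : List (Lit n) := L.filter (fun p => p.2 = i)

lemma expressed_iff (L : List (Lit n)) (i : Fin n) :
    OrderExpressed L i ↔ (fi L i).head? = some (true, i) := Iff.rfl

lemma fi_decomp (L : List (Lit n)) (i : Fin n) (p : ℕ) (hp : p < L.length) :
    fi L i = fi (L.take p) i ++ (if L[p].2 = i then [L[p]] else []) ++ fi (L.drop (p+1)) i := by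
  conv_lhs => rw [fi, ← List.take_append_drop p L, List.drop_eq_getElem_cons hp]
  simp only [List.filter_append, List.filter_cons]
  by_cases h : L[p].2 = i <;> simp [fi, h]

lemma fi_eraseIdx (L : List (Lit n)) (i : Fin n) (p : ℕ) :
    fi (L.eraseIdx p) i = fi (L.take p) i ++ fi (L.drop (p+1)) i := by
  rw [List.eraseIdx_eq_take_drop_succ, fi, List.filter_append]; rfl

lemma fi_eraseIdx_of_ne (L : List (Lit n)) (i : Fin n) (p : ℕ) (hp : p < L.length)
    (hne : L[p].2 ≠ i) : fi (L.eraseIdx p) i = fi L i := by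
  rw [fi_eraseIdx, fi_decomp L i p hp, if_neg hne]; simp

lemma expressed_eraseIdx_of_ne (L : List (Lit n)) (i : Fin n) (p : ℕ) (hp : p < L.length)
    (hne : L[p].2 ≠ i) : (OrderExpressed (L.eraseIdx p) i ↔ OrderExpressed L i) := by
  rw [expressed_iff, expressed_iff, fi_eraseIdx_of_ne L i p hp hne]

lemma expressed_eraseIdx_of_notfirst (L : List (Lit n)) (i : Fin n) (p : ℕ)
    (hA : fi (L.take p) i ≠ []) (hp : p < L.length) :
    (OrderExpressed (L.eraseIdx p) i ↔ OrderExpressed L i) := by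
  rw [expressed_iff, expressed_iff, fi_eraseIdx, fi_decomp L i p hp]
  obtain ⟨x, t, hxt⟩ := List.exists_cons_of_ne_nil hA
  simp [hxt]

lemma fi_first (L : List (Lit n)) (i : Fin n) (p : ℕ) (hp : p < L.length)
    (hi : L[p].2 = i) (hA : fi (L.take p) i = []) :
    fi L i = L[p] :: fi (L.eraseIdx p) i := by
  rw [fi_eraseIdx, fi_decomp L i p hp, if_pos hi, hA]; simp

/-- uniqueness of first occurrence -/
lemma first_unique (L : List (Lit n)) (i : Fin n) (p q : ℕ)
    (hp : p < L.length) (hq : q < L.length)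
    (hip : L[p].2 = i) (hiq : L[q].2 = i)
    (hAp : fi (L.take p) i = []) (hAq : fi (L.take q) i = []) : p = q := by
  by_contra hne
  rcases Nat.lt_or_ge p q with h | h
  · have hmem : L[p] ∈ fi (L.take q) i := by
      refine List.mem_filter.mpr ⟨?_, by simp [hip]⟩
      have : (L.take q)[p]'(by simp [h, hq]; omega) = L[p] := List.getElem_take ..
      rw [← this]; exact List.getElem_mem _
    simp [hAq] at hmem
  · have h' : q < p := by omega
    have hmem : L[q] ∈ fi (L.take p) i := by
      refine List.mem_filter.mpr ⟨?_, by simp [hiq]⟩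
      have : (L.take p)[q]'(by simp [h', hp]; omega) = L[q] := List.getElem_take ..
      rw [← this]; exact List.getElem_mem _
    simp [hAp] at hmem

/-- the set of expressed variables -/
def S (L : List (Lit n)) : Finset (Fin n) := Finset.univ.filter (fun i => OrderExpressed L i)

lemma erase_S (L : List (Lit n)) (p : ℕ) (hp : p < L.length) :
    (S (L.eraseIdx p)).erase L[p].2 = (S L).erase L[p].2 := by
  ext j
  simp only [Finset.mem_erase, S, Finset.mem_filter, Finset.mem_univ, true_and]
  constructor
  · rintro ⟨hj, h⟩
    exact ⟨hj, (expressed_eraseIdx_of_ne L j p hp (fun h' => hj h'.symm)).mp h⟩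
  · rintro ⟨hj, h⟩
    exact ⟨hj, (expressed_eraseIdx_of_ne L j p hp (fun h' => hj h'.symm)).mpr h⟩

lemma card_lt_iff {A B : Finset (Fin n)} (i : Fin n) (h : A.erase i = B.erase i) :
    A.card < B.card ↔ (i ∈ B ∧ i ∉ A) := by
  have hAB : ∀ j, j ≠ i → (j ∈ A ↔ j ∈ B) := by
    intro j hj
    constructor <;> intro hm
    · have := h ▸ (Finset.mem_erase.mpr ⟨hj, hm⟩); exact (Finset.mem_erase.mp this).2
    · have := h.symm ▸ (Finset.mem_erase.mpr ⟨hj, hm⟩); exact (Finset.mem_erase.mp this).2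
  by_cases hA : i ∈ A <;> by_cases hB : i ∈ B
  · have hE : A = B := Finset.ext fun j => by
      by_cases hj : j = i
      · subst hj; simp [hA, hB]
      · exact hAB j hj
    simp [hE, hA]
  · have hBA : B = A.erase i := by
      rw [← Finset.erase_eq_of_notMem hB, ← h]
    constructor
    · intro hlt
      rw [hBA, Finset.card_erase_of_mem hA] at hlt
      omega
    · rintro ⟨hiB, -⟩; exact absurd hiB hB
  · have hAB' : A = B.erase i := by
      rw [← Finset.erase_eq_of_notMem hA, h]
    have h1 : 0 < B.card := Finset.card_pos.mpr ⟨i, hB⟩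
    refine ⟨fun _ => ⟨hB, hA⟩, fun _ => ?_⟩
    rw [hAB', Finset.card_erase_of_mem hB]
    omega
  · have hE : A = B := Finset.ext fun j => by
      by_cases hj : j = i
      · subst hj; simp [hA, hB]
      · exact hAB j hj
    simp [hE, hA, hB]

lemma fitness_eq_card_S (L : List (Lit n)) : orderFitness L = (S L).card := rfl

lemma lt_iff (L : List (Lit n)) (p : ℕ) (hp : p < L.length) :
    orderFitness (L.eraseIdx p) < orderFitness L ↔
      (OrderExpressed L L[p].2 ∧ ¬ OrderExpressed (L.eraseIdx p) L[p].2) := by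
  rw [fitness_eq_card_S, fitness_eq_card_S, card_lt_iff L[p].2 (erase_S L p hp)]
  simp [S]

lemma gt_iff (L : List (Lit n)) (p : ℕ) (hp : p < L.length) :
    orderFitness L < orderFitness (L.eraseIdx p) ↔
      (OrderExpressed (L.eraseIdx p) L[p].2 ∧ ¬ OrderExpressed L L[p].2) := by
  rw [fitness_eq_card_S, fitness_eq_card_S, card_lt_iff L[p].2 (erase_S L p hp).symm]
  simp [S]

/-- if the fitness changes, p is the first occurrence of its variable -/
lemma first_of_change (L : List (Lit n)) (p : ℕ) (hp : p < L.length)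
    (h : ¬ (OrderExpressed (L.eraseIdx p) L[p].2 ↔ OrderExpressed L L[p].2)) :
    fi (L.take p) L[p].2 = [] := by
  by_contra hA
  exact h (expressed_eraseIdx_of_notfirst L L[p].2 p hA hp)

end OrderAux

open OrderAux

/-- **Bounds on critical leaves for ORDER:** `c⁺(L) ≤ r(L) + v(L)` and `c⁻(L) ≤ r(L)`. -/
theorem order_critical_leaves_bound {n : ℕ} (L : List (Lit n)) :
    orderCritPos L ≤ orderRedundant L + orderFitness L ∧
    orderCritNeg L ≤ orderRedundant L := by
  rcases L with _ | ⟨a, L'⟩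
  · simp [orderCritPos, orderCritNeg, orderRedundant]
  set L : List (Lit n) := a :: L' with hL
  constructor
  · -- c⁺ ≤ v ≤ r + v
    have h1 : orderCritPos L ≤ orderFitness L := by
      rw [fitness_eq_card_S]
      apply Finset.card_le_card_of_injOn (fun p => (L.getD p a).2)
      · intro p hp
        simp only [orderCritPos, Finset.mem_coe, Finset.mem_filter, Finset.mem_range] at hp ⊢
        obtain ⟨hplen, hlt⟩ := hp
        rw [List.getD_eq_getElem L a hplen]
        have := (lt_iff L p hplen).mp hlt
        simp only [S, Finset.mem_filter, Finset.mem_univ, true_and]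
        exact this.1
      · intro p hp q hq hpq
        simp only [Finset.coe_filter, Finset.mem_range, Set.mem_setOf_eq, orderCritPos] at hp hq
        obtain ⟨hplen, hplt⟩ := hp
        obtain ⟨hqlen, hqlt⟩ := hq
        simp only [List.getD_eq_getElem L a hplen, List.getD_eq_getElem L a hqlen] at hpq
        have hpf := first_of_change L p hplen (by
          have := (lt_iff L p hplen).mp hplt; tauto)
        have hqf := first_of_change L q hqlen (by
          have := (lt_iff L q hqlen).mp hqlt; tauto)
        exact first_unique L L[p].2 p q hplen hqlen rfl hpq.symm hpf (hpq ▸ hqf)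
    omega
  · -- c⁻ ≤ r : map each crit-neg position to the next occurrence of its variable
    apply Finset.card_le_card_of_injOn
      (fun p => p + 1 + (L.drop (p+1)).findIdx (fun x => x.2 = (L.getD p a).2))
    · intro p hp
      simp only [orderCritNeg, Finset.mem_coe, Finset.mem_filter, Finset.mem_range] at hp
      obtain ⟨hplen, hgt⟩ := hp
      beta_reduce
      rw [List.getD_eq_getElem L a hplen]
      set i := L[p].2 with hi
      have hch := (gt_iff L p hplen).mp hgt
      have hpf : fi (L.take p) i = [] := first_of_change L p hplen (by tauto)
      -- the drop part of fi (eraseIdx) is nonempty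
      have hdrop : fi (L.drop (p+1)) i ≠ [] := by
        intro hnil
        have : fi (L.eraseIdx p) i = [] := by
          rw [fi_eraseIdx, hpf, hnil]; rfl
        have hE := hch.1
        rw [expressed_iff, this] at hE
        simp at hE
      have hex : ∃ x ∈ L.drop (p+1), (fun x : Lit n => decide (x.2 = i)) x = true := by
        rcases List.exists_mem_of_ne_nil _ hdrop with ⟨x, hx⟩
        exact ⟨x, (List.mem_filter.mp hx).1, (List.mem_filter.mp hx).2⟩
      set k := (L.drop (p+1)).findIdx (fun x => x.2 = i) with hk
      have hklen : k < (L.drop (p+1)).length := List.findIdx_lt_length_of_exists hex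
      have hqlen : p + 1 + k < L.length := by
        rw [List.length_drop] at hklen; omega
      have hqvar : L[p+1+k].2 = i := by
        have h1 : (L.drop (p+1))[k] = L[p+1+k] := by
          rw [List.getElem_drop]
        have := List.findIdx_getElem (w := hklen) (p := fun x : Lit n => decide (x.2 = i))
        rw [h1] at this
        simpa using this
      -- p+1+k is redundant: not a first occurrence
      have hnotfirst : fi (L.take (p+1+k)) i ≠ [] := by
        intro hnil
        have hmem : L[p] ∈ fi (L.take (p+1+k)) i := by
          refine List.mem_filter.mpr ⟨?_, by simp [hi]⟩
          have h2 : (L.take (p+1+k))[p]'(by simp [hqlen]; omega) = L[p] := List.getElem_take ..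
          rw [← h2]; exact List.getElem_mem _
        simp [hnil] at hmem
      have hsame : OrderExpressed (L.eraseIdx (p+1+k)) i ↔ OrderExpressed L i :=
        expressed_eraseIdx_of_notfirst L i (p+1+k) hnotfirst hqlen
      have hfit : orderFitness (L.eraseIdx (p+1+k)) = orderFitness L := by
        rw [fitness_eq_card_S, fitness_eq_card_S]
        congr 1
        ext j
        by_cases hj : j = i
        · subst hj
          simp only [S, Finset.mem_filter, Finset.mem_univ, true_and]
          exact hsame
        · have := expressed_eraseIdx_of_ne L j (p+1+k) hqlen (by rw [hqvar]; exact fun h => hj h.symm)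
          simp only [S, Finset.mem_filter, Finset.mem_univ, true_and]
          exact this
      simp only [orderRedundant, Finset.mem_coe, Finset.mem_filter, Finset.mem_range]
      exact ⟨hqlen, hfit⟩
    · intro p hp q hq hpq
      simp only [Finset.coe_filter, Finset.mem_range, Set.mem_setOf_eq, orderCritNeg] at hp hq
      obtain ⟨hplen, hpgt⟩ := hp
      obtain ⟨hqlen, hqgt⟩ := hq
      simp only [List.getD_eq_getElem L a hplen, List.getD_eq_getElem L a hqlen] at hpq
      -- vars at target positions
      set i := L[p].2 with hi
      set j := L[q].2 with hj
      have hpch := (gt_iff L p hplen).mp hpgt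
      have hqch := (gt_iff L q hqlen).mp hqgt
      have hpf : fi (L.take p) i = [] := first_of_change L p hplen (by tauto)
      have hqf : fi (L.take q) j = [] := first_of_change L q hqlen (by tauto)
      -- show i = j using that both targets equal and target var is both i and j
      have hdropP : fi (L.drop (p+1)) i ≠ [] := by
        intro hnil
        have h0 : fi (L.eraseIdx p) i = [] := by rw [fi_eraseIdx, hpf, hnil]; rfl
        have := hpch.1; rw [expressed_iff, h0] at this; simp at this
      have hdropQ : fi (L.drop (q+1)) j ≠ [] := by
        intro hnil
        have h0 : fi (L.eraseIdx q) j = [] := by rw [fi_eraseIdx, hqf, hnil]; rfl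
        have := hqch.1; rw [expressed_iff, h0] at this; simp at this
      have hexP : ∃ x ∈ L.drop (p+1), (fun x : Lit n => decide (x.2 = i)) x = true := by
        rcases List.exists_mem_of_ne_nil _ hdropP with ⟨x, hx⟩
        exact ⟨x, (List.mem_filter.mp hx).1, (List.mem_filter.mp hx).2⟩
      have hexQ : ∃ x ∈ L.drop (q+1), (fun x : Lit n => decide (x.2 = j)) x = true := by
        rcases List.exists_mem_of_ne_nil _ hdropQ with ⟨x, hx⟩
        exact ⟨x, (List.mem_filter.mp hx).1, (List.mem_filter.mp hx).2⟩
      set kp := (L.drop (p+1)).findIdx (fun x => x.2 = i) with hkp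
      set kq := (L.drop (q+1)).findIdx (fun x => x.2 = j) with hkq
      have hkplen : kp < (L.drop (p+1)).length := List.findIdx_lt_length_of_exists hexP
      have hkqlen : kq < (L.drop (q+1)).length := List.findIdx_lt_length_of_exists hexQ
      have hqplen : p + 1 + kp < L.length := by rw [List.length_drop] at hkplen; omega
      have hqqlen : q + 1 + kq < L.length := by rw [List.length_drop] at hkqlen; omega
      have hvarP : L[p+1+kp].2 = i := by
        have h1 : (L.drop (p+1))[kp] = L[p+1+kp] := by rw [List.getElem_drop]
        have := List.findIdx_getElem (w := hkplen) (p := fun x : Lit n => decide (x.2 = i))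
        rw [h1] at this; simpa using this
      have hvarQ : L[q+1+kq].2 = j := by
        have h1 : (L.drop (q+1))[kq] = L[q+1+kq] := by rw [List.getElem_drop]
        have := List.findIdx_getElem (w := hkqlen) (p := fun x : Lit n => decide (x.2 = j))
        rw [h1] at this; simpa using this
      have hij : i = j := by
        have hopt : L[p+1+kp]? = L[q+1+kq]? := by rw [hpq]
        rw [List.getElem?_eq_getElem hqplen, List.getElem?_eq_getElem hqqlen] at hopt
        have h3 := Option.some.inj hopt
        rw [← hvarP, ← hvarQ, h3]
      exact first_unique L i p q hplen hqlen rfl (hij ▸ rfl) hpf (hij ▸ hqf)
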